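/- Let n ≥ 1 and let P be an n×n matrix over ℚ. Consider row vectors in dimension 2n written as [x | s] with x, s ∈ ℚ^{1×n}. There exist 2n matrices G₁, …, G_{2n} ∈ ℚ^{2n×2n}, each of which is a dot-product overwrite matrix U(dst;c) for some index dst and some coefficient vector c with c_dst = 0, such that for all x, s ∈ ℚ^{1×n}: [x | s] · G₁ · G₂ ⋯ G_{2n} = [xP | xP]. -/

import Mathlib

/-- The dot-product overwrite matrix
`U(dst; c) = I − e_dst e_dstᵀ + c e_dstᵀ` over an arbitrary finite index type. -/
def overwrite {ι : Type*} [Fintype ι] [DecidableEq ι] (K : Type*) [CommRing K]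
    (dst : ι) (c : ι → K) : Matrix ι ι K :=
  1 - Matrix.vecMulVec (Pi.single dst 1) (Pi.single dst 1)
    + Matrix.vecMulVec c (Pi.single dst 1)

lemma vecMul_overwrite {ι : Type*} [Fintype ι] [DecidableEq ι] {K : Type*} [CommRing K]
    (r : ι → K) (d : ι) (c : ι → K) :
    Matrix.vecMul r (overwrite K d c) = fun j => if j = d then dotProduct r c else r j := by
  funext j
  simp only [overwrite, Matrix.vecMul, dotProduct, Matrix.add_apply, Matrix.sub_apply,
    Matrix.one_apply, Matrix.vecMulVec_apply]
  by_cases h : j = d <;> simp [h, mul_add, mul_sub, Finset.sum_add_distrib, Finset.sum_sub_distrib,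
    Pi.single_apply, mul_ite, Finset.sum_ite_eq', Finset.sum_ite_eq]

lemma phase_lemma {ι : Type*} [Fintype ι] [DecidableEq ι] {K : Type*} [CommRing K] :
    ∀ {m : ℕ} (e : Fin m → ι) (_ : Function.Injective e) (c : Fin m → ι → K)
      (_ : ∀ i i', c i (e i') = 0) (r : ι → K),
      (∀ i, Matrix.vecMul r (List.ofFn fun i => overwrite K (e i) (c i)).prod (e i)
          = dotProduct r (c i)) ∧
      (∀ j, (∀ i, e i ≠ j) →
        Matrix.vecMul r (List.ofFn fun i => overwrite K (e i) (c i)).prod j = r j) := by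
  intro m
  induction m with
  | zero =>
    intro e he c hc r
    refine ⟨fun i => i.elim0, fun j _ => ?_⟩
    simp [Matrix.vecMul_one]
  | succ m ih =>
    intro e he c hc r
    rw [List.ofFn_succ, List.prod_cons]
    set r' : ι → K := Matrix.vecMul r (overwrite K (e 0) (c 0)) with hr'
    have hr'eq : r' = fun j => if j = e 0 then dotProduct r (c 0) else r j :=
      vecMul_overwrite r (e 0) (c 0)
    have key : ∀ M : Matrix ι ι K, Matrix.vecMul r (overwrite K (e 0) (c 0) * M)
        = Matrix.vecMul r' M := by
      intro M; rw [← Matrix.vecMul_vecMul]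
    rw [key]
    have he' : Function.Injective (e ∘ Fin.succ) :=
      he.comp (Fin.succ_injective m)
    have hc' : ∀ i i', (c ∘ Fin.succ) i ((e ∘ Fin.succ) i') = 0 := fun i i' => hc _ _
    obtain ⟨h1, h2⟩ := ih (e ∘ Fin.succ) he' (c ∘ Fin.succ) hc' r'
    simp only [Function.comp_def] at h1 h2
    have hdot : ∀ i : Fin m, dotProduct r' (c (Fin.succ i))
        = dotProduct r (c (Fin.succ i)) := by
      intro i
      unfold dotProduct
      apply Finset.sum_congr rfl
      intro j _
      by_cases hj : j = e 0
      · subst hj; rw [hc (Fin.succ i) 0, mul_zero, mul_zero]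
      · rw [hr'eq]; simp [hj]
    constructor
    · intro i
      induction i using Fin.cases with
      | zero =>
        rw [h2 (e 0) (fun i' => fun hcon => (Fin.succ_ne_zero i') (he hcon))]
        rw [hr'eq]; simp
      | succ i =>
        have := h1 i
        try simp only [Function.comp_apply] at this
        rw [this, hdot]
    · intro j hj
      rw [h2 j (fun i => hj (Fin.succ i)), hr'eq]
      simp only []
      rw [if_neg (fun h => hj 0 h.symm)]

/-- any `n×n` matrix `P` over `ℚ` can be applied to the main part of a
row vector `[x | s]` in dimension `2n` (main part indexed by `Sum.inl`, scratch by
`Sum.inr`) by a product of `2n` dot-product overwrite matrices, yielding `[xP | xP]`. -/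
theorem apply_matrix_with_scratch {n : ℕ} (hn : 1 ≤ n)
    (P : Matrix (Fin n) (Fin n) ℚ) :
    ∃ G : Fin (2 * n) → Matrix (Fin n ⊕ Fin n) (Fin n ⊕ Fin n) ℚ,
      (∀ i, ∃ (dst : Fin n ⊕ Fin n) (c : Fin n ⊕ Fin n → ℚ),
          c dst = 0 ∧ G i = overwrite ℚ dst c) ∧
      ∀ x s : Fin n → ℚ,
        Matrix.vecMul (Sum.elim x s) (List.ofFn G).prod =
          Sum.elim (Matrix.vecMul x P) (Matrix.vecMul x P) := by
  classical
  -- phase A: write xP into scratch; phase B: copy scratch to main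
  set cA : Fin n → (Fin n ⊕ Fin n) → ℚ := fun i => Sum.elim (fun k => P k i) 0 with hcA
  set cB : Fin n → (Fin n ⊕ Fin n) → ℚ := fun i => Pi.single (Sum.inr i) 1 with hcB
  set A : Fin n → Matrix (Fin n ⊕ Fin n) (Fin n ⊕ Fin n) ℚ :=
    fun i => overwrite ℚ (Sum.inr i) (cA i) with hA
  set B : Fin n → Matrix (Fin n ⊕ Fin n) (Fin n ⊕ Fin n) ℚ :=
    fun i => overwrite ℚ (Sum.inl i) (cB i) with hB
  refine ⟨fun i => Fin.append A B (Fin.cast (two_mul n) i), ?_, ?_⟩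
  · intro i
    have key : ∀ j : Fin (n + n), ∃ (dst : Fin n ⊕ Fin n) (c : Fin n ⊕ Fin n → ℚ),
        c dst = 0 ∧ Fin.append A B j = overwrite ℚ dst c := by
      intro j
      induction j using Fin.addCases with
      | left j => exact ⟨Sum.inr j, cA j, by simp [hcA], by rw [Fin.append_left]⟩
      | right j => exact ⟨Sum.inl j, cB j, by simp [hcB, Pi.single_apply],
          by rw [Fin.append_right]⟩
    exact key _
  · intro x s
    have hofn : (List.ofFn fun i : Fin (2 * n) => Fin.append A B (Fin.cast (two_mul n) i))
        = List.ofFn A ++ List.ofFn B := by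
      rw [← List.ofFn_fin_append, ← List.ofFn_congr (two_mul n).symm (Fin.append A B)]
    rw [hofn, List.prod_append, ← Matrix.vecMul_vecMul]
    -- phase A
    obtain ⟨hA1, hA2⟩ := phase_lemma (Sum.inr : Fin n → Fin n ⊕ Fin n)
      Sum.inr_injective cA (fun i i' => rfl) (Sum.elim x s)
    have hresA : Matrix.vecMul (Sum.elim x s) (List.ofFn A).prod
        = Sum.elim x (Matrix.vecMul x P) := by
      funext j
      cases j with
      | inl j => simpa using hA2 (Sum.inl j) (fun i h => by simp at h)
      | inr j =>
        rw [Sum.elim_inr]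
        have := hA1 j
        rw [this]
        simp [dotProduct, Fintype.sum_sum_type, hcA, Matrix.vecMul]
    rw [hresA]
    -- phase B
    obtain ⟨hB1, hB2⟩ := phase_lemma (Sum.inl : Fin n → Fin n ⊕ Fin n)
      Sum.inl_injective cB (fun i i' => by simp [hcB, Pi.single_apply]) 
      (Sum.elim x (Matrix.vecMul x P))
    funext j
    cases j with
    | inl j =>
      have := hB1 j
      rw [this]
      simp [hcB, dotProduct_single]
    | inr j => simpa using hB2 (Sum.inr j) (fun i h => by simp at h)
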